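/- Let K be a field of characteristic p > 0 and n ≥ 1. The kernel of the K-algebra homomorphism φ: K[x_0,...,x_{n-1},y] → K[T^{Γ_{p,n}}] given by φ(x_j) = T^{p^n - p^j} and φ(y) = T^{p^n} is the ideal generated by the n polynomials x_{n-1}^p - y^{p-1} and x_j^p - x_{n-1}^p x_{j+1} for 0 ≤ j ≤ n-2. -/

import Mathlib

open MvPolynomial Finset

def wt (p n : ℕ) (i : Fin (n + 1)) : ℕ :=
  if (i : ℕ) = n then p ^ n else p ^ n - p ^ (i : ℕ)

def Edeg (p n : ℕ) (d : Fin (n + 1) →₀ ℕ) : ℕ :=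
  ∑ i, wt p n i * d i

def mu (n : ℕ) (d : Fin (n + 1) →₀ ℕ) : ℕ :=
  ∑ i, d i * (n - (i : ℕ))

lemma geom_nat (p : ℕ) (hp : 1 ≤ p) :
    ∀ m : ℕ, ∑ j ∈ range m, (p - 1) * p ^ j = p ^ m - 1 := by
  intro m
  induction m with
  | zero => simp
  | succ m ih =>
    rw [Finset.sum_range_succ, ih, pow_succ, Nat.sub_mul, one_mul, mul_comm p (p ^ m)]
    have h1 : 1 ≤ p ^ m := Nat.one_le_pow _ _ (by omega)
    have h2 : p ^ m ≤ p ^ m * p := Nat.le_mul_of_pos_right _ (by omega)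
    omega

lemma digit_unique (p : ℕ) (hp : 2 ≤ p) :
    ∀ (m : ℕ) (f g : ℕ → ℕ), (∀ j, j < m → f j < p) → (∀ j, j < m → g j < p) →
    (∑ j ∈ range m, f j * p ^ j) = (∑ j ∈ range m, g j * p ^ j) →
    ∀ j, j < m → f j = g j := by
  intro m
  induction m with
  | zero => intro f g _ _ _ j hj; omega
  | succ m ih =>
    intro f g hf hg h j hj
    rw [Finset.sum_range_succ' (fun j => f j * p ^ j),
        Finset.sum_range_succ' (fun j => g j * p ^ j)] at h
    simp only [pow_succ, pow_zero, mul_one] at h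
    have hrw : ∀ (u : ℕ → ℕ), ∑ i ∈ range m, u (i + 1) * (p ^ i * p)
        = p * (∑ i ∈ range m, u (i + 1) * p ^ i) := by
      intro u; rw [Finset.mul_sum]; exact Finset.sum_congr rfl fun i _ => by ring
    rw [hrw f, hrw g] at h
    have hf0 : f 0 < p := hf 0 (by omega)
    have hg0 : g 0 < p := hg 0 (by omega)
    have h0 : f 0 = g 0 := by
      have e1 := congrArg (· % p) h
      simp only [Nat.mul_add_mod] at e1
      rwa [Nat.mod_eq_of_lt hf0, Nat.mod_eq_of_lt hg0] at e1
    have hsum : (∑ i ∈ range m, f (i + 1) * p ^ i) = ∑ i ∈ range m, g (i + 1) * p ^ i := by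
      have h2 : p * (∑ i ∈ range m, f (i + 1) * p ^ i)
          = p * (∑ i ∈ range m, g (i + 1) * p ^ i) := by omega
      exact Nat.eq_of_mul_eq_mul_left (by omega) h2
    have hrec := ih (fun j => f (j + 1)) (fun j => g (j + 1))
      (fun j hjm => hf (j + 1) (by omega)) (fun j hjm => hg (j + 1) (by omega)) hsum
    match j with
    | 0 => exact h0
    | j + 1 => exact hrec j (by omega)

def digs (n : ℕ) (e : Fin (n + 1) →₀ ℕ) (j : ℕ) : ℕ :=
  if hj : j < n + 1 then e ⟨j, hj⟩ else 0

lemma Edeg_key (p n : ℕ) (hp : 2 ≤ p) (e : Fin (n + 1) →₀ ℕ) :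
    Edeg p n e + (∑ j ∈ range n, digs n e j * p ^ j)
      = (∑ j ∈ range (n + 1), digs n e j) * p ^ n := by
  simp only [digs]
  have h1 : Edeg p n e = ∑ j ∈ range (n + 1),
      (if j = n then p ^ n else p ^ n - p ^ j) * (if hj : j < n + 1 then e ⟨j, hj⟩ else 0) := by
    rw [Edeg, ← Fin.sum_univ_eq_sum_range]
    refine Finset.sum_congr rfl fun i _ => ?_
    rw [dif_pos i.isLt]
    simp [wt]
  rw [h1, Finset.sum_range_succ, if_pos rfl, Finset.sum_range_succ
    (fun j => if hj : j < n + 1 then e ⟨j, hj⟩ else 0), add_mul]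
  rw [add_right_comm, ← Finset.sum_add_distrib, Finset.sum_mul]
  congr 1
  · refine Finset.sum_congr rfl fun j hj => ?_
    rw [Finset.mem_range] at hj
    rw [if_neg (by omega)]
    have hle : p ^ j ≤ p ^ n := Nat.pow_le_pow_right (by omega) (by omega)
    set D := (if h : j < n + 1 then e ⟨j, h⟩ else 0)
    rw [mul_comm D (p ^ j), ← add_mul, Nat.sub_add_cancel hle, mul_comm]
  · rw [mul_comm]

lemma Edeg_inj (p n : ℕ) (hp : 2 ≤ p) (d d' : Fin (n + 1) →₀ ℕ)
    (hd : ∀ i : Fin (n + 1), (i : ℕ) < n → d i < p)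
    (hd' : ∀ i : Fin (n + 1), (i : ℕ) < n → d' i < p)
    (h : Edeg p n d = Edeg p n d') : d = d' := by
  have hP : 1 ≤ p ^ n := Nat.one_le_pow _ _ (by omega)
  set D : ℕ → ℕ := digs n d with hD
  set D' : ℕ → ℕ := digs n d' with hD'
  have k1 := Edeg_key p n hp d
  have k2 := Edeg_key p n hp d'
  rw [← hD] at k1
  rw [← hD'] at k2
  have hDlt : ∀ j, j < n → D j < p := by
    intro j hj
    rw [hD, digs, dif_pos (by omega)]
    exact hd _ hj
  have hDlt' : ∀ j, j < n → D' j < p := by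
    intro j hj
    rw [hD', digs, dif_pos (by omega)]
    exact hd' _ hj
  have hA : (∑ j ∈ range n, D j * p ^ j) ≤ p ^ n - 1 := by
    rw [← geom_nat p (by omega) n]
    refine Finset.sum_le_sum fun j hj => ?_
    rw [Finset.mem_range] at hj
    exact Nat.mul_le_mul_right _ (by have := hDlt j hj; omega)
  have hA' : (∑ j ∈ range n, D' j * p ^ j) ≤ p ^ n - 1 := by
    rw [← geom_nat p (by omega) n]
    refine Finset.sum_le_sum fun j hj => ?_
    rw [Finset.mem_range] at hj
    exact Nat.mul_le_mul_right _ (by have := hDlt' j hj; omega)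
  -- conclude sums and digit parts are equal
  have hSA : (∑ j ∈ range (n + 1), D j) = (∑ j ∈ range (n + 1), D' j) ∧
      (∑ j ∈ range n, D j * p ^ j) = (∑ j ∈ range n, D' j * p ^ j) := by
    set S1 := ∑ j ∈ range (n + 1), D j with hS1
    set S2 := ∑ j ∈ range (n + 1), D' j with hS2
    rcases Nat.le_total S1 S2 with hle | hle
    · obtain ⟨k, hk⟩ := Nat.le.dest hle
      rw [← hk, add_mul] at k2
      by_cases hk0 : k = 0
      · subst hk0; constructor <;> omega
      · have : p ^ n ≤ k * p ^ n := Nat.le_mul_of_pos_left _ (by omega)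
        omega
    · obtain ⟨k, hk⟩ := Nat.le.dest hle
      rw [← hk, add_mul] at k1
      by_cases hk0 : k = 0
      · subst hk0; constructor <;> omega
      · have : p ^ n ≤ k * p ^ n := Nat.le_mul_of_pos_left _ (by omega)
        omega
  have hdig := digit_unique p hp n D D' hDlt hDlt' hSA.2
  have hlast : D n = D' n := by
    have e1 : (∑ j ∈ range n, D j) = ∑ j ∈ range n, D' j :=
      Finset.sum_congr rfl fun j hj => hdig j (Finset.mem_range.mp hj)
    have e2 := hSA.1
    rw [Finset.sum_range_succ, Finset.sum_range_succ] at e2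
    omega
  ext i
  have hDi : D (i : ℕ) = d i := by rw [hD, digs, dif_pos i.isLt]
  have hDi' : D' (i : ℕ) = d' i := by rw [hD', digs, dif_pos i.isLt]
  by_cases hi : (i : ℕ) < n
  · rw [← hDi, ← hDi']; exact hdig _ hi
  · have : (i : ℕ) = n := by have := i.isLt; omega
    rw [← hDi, ← hDi', this]; exact hlast

lemma mu_add (n : ℕ) (a b : Fin (n + 1) →₀ ℕ) : mu n (a + b) = mu n a + mu n b := by
  simp [mu, Finsupp.add_apply, add_mul, Finset.sum_add_distrib]

lemma mu_single (n : ℕ) (i : Fin (n + 1)) (k : ℕ) :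
    mu n (Finsupp.single i k) = k * (n - (i : ℕ)) := by
  rw [mu, Finset.sum_eq_single i]
  · rw [Finsupp.single_eq_same]
  · intro j _ hji
    rw [Finsupp.single_eq_of_ne' (Ne.symm hji), zero_mul]
  · intro h; exact absurd (Finset.mem_univ i) h

lemma aeval_wt_monomial (K : Type*) [CommSemiring K] (p n : ℕ)
    (d : Fin (n + 1) →₀ ℕ) (c : K) :
    aeval (fun i => (Polynomial.X : Polynomial K) ^ wt p n i) (monomial d c)
      = Polynomial.C c * Polynomial.X ^ Edeg p n d := by
  rw [aeval_monomial]
  congr 1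
  rw [Finsupp.prod]
  have h1 : ∀ i ∈ d.support, ((Polynomial.X : Polynomial K) ^ wt p n i) ^ d i
      = Polynomial.X ^ (wt p n i * d i) := fun i _ => (pow_mul _ _ _).symm
  rw [Finset.prod_congr rfl h1, Finset.prod_pow_eq_pow_sum]
  congr 1
  rw [Edeg]
  refine Finset.sum_subset (Finset.subset_univ _) fun i _ hi => ?_
  rw [Finsupp.notMem_support_iff.mp hi, mul_zero]

theorem Gamma_kernel (K : Type*) [Field K] (p : ℕ) (hp : p.Prime) [CharP K p]
    (n : ℕ) (hn : 1 ≤ n) :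
    RingHom.ker (MvPolynomial.aeval (R := K)
        (fun i : Fin (n + 1) =>
          if (i : ℕ) = n then (Polynomial.X : Polynomial K) ^ (p ^ n)
          else (Polynomial.X : Polynomial K) ^ (p ^ n - p ^ (i : ℕ)))) =
      Ideal.span {f : MvPolynomial (Fin (n + 1)) K |
        f = (X (⟨n - 1, by omega⟩ : Fin (n + 1))) ^ p
              - (X (⟨n, by omega⟩ : Fin (n + 1))) ^ (p - 1) ∨
        ∃ j, ∃ _h : j + 2 ≤ n,
          f = (X (⟨j, by omega⟩ : Fin (n + 1))) ^ p
                - (X (⟨n - 1, by omega⟩ : Fin (n + 1))) ^ p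
                  * X (⟨j + 1, by omega⟩ : Fin (n + 1))} := by
  classical
  have hp2 : 2 ≤ p := hp.two_le
  have hlt1 : n - 1 < n + 1 := by omega
  have hlt2 : n < n + 1 := by omega
  have hfeq : ∀ i : Fin (n + 1),
      (if (i : ℕ) = n then (Polynomial.X : Polynomial K) ^ (p ^ n)
        else (Polynomial.X : Polynomial K) ^ (p ^ n - p ^ (i : ℕ)))
        = Polynomial.X ^ wt p n i := by
    intro i; rw [wt]; split_ifs <;> rfl
  simp only [hfeq]
  set Φ : MvPolynomial (Fin (n + 1)) K →ₐ[K] Polynomial K :=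
    aeval (fun i => (Polynomial.X : Polynomial K) ^ wt p n i) with hΦ
  set SS : Set (MvPolynomial (Fin (n + 1)) K) :=
      {f : MvPolynomial (Fin (n + 1)) K |
        f = (X (⟨n - 1, by omega⟩ : Fin (n + 1))) ^ p
              - (X (⟨n, by omega⟩ : Fin (n + 1))) ^ (p - 1) ∨
        ∃ j, ∃ _h : j + 2 ≤ n,
          f = (X (⟨j, by omega⟩ : Fin (n + 1))) ^ p
                - (X (⟨n - 1, by omega⟩ : Fin (n + 1))) ^ p
                  * X (⟨j + 1, by omega⟩ : Fin (n + 1))} with hSS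
  show RingHom.ker (Φ : MvPolynomial (Fin (n + 1)) K →+* Polynomial K) = Ideal.span SS
  -- generators are in the kernel
  have hX : ∀ i : Fin (n + 1), Φ (X i) = Polynomial.X ^ wt p n i := fun i => aeval_X _ i
  have hgen : ∀ f ∈ SS, Φ f = 0 := by
    intro f hf
    rw [hSS] at hf
    rcases hf with hf | ⟨j, hj, hf⟩
    · subst hf
      rw [map_sub, map_pow, map_pow, hX, hX]
      have w1 : wt p n (⟨n - 1, by omega⟩ : Fin (n + 1)) = p ^ n - p ^ (n - 1) := by
        rw [wt]
        exact if_neg (by simp; omega)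
      have w2 : wt p n (⟨n, by omega⟩ : Fin (n + 1)) = p ^ n := by
        rw [wt]
        exact if_pos rfl
      rw [w1, w2, ← pow_mul, ← pow_mul]
      have e1 : p ^ (n - 1) * p = p ^ n := by
        rw [← pow_succ]; congr 1; omega
      have e3 : p ^ n * (p - 1) + p ^ n = p ^ n * p := by
        rw [← Nat.mul_succ]; congr 1; omega
      have e2 : (p ^ n - p ^ (n - 1)) * p = p ^ n * (p - 1) := by
        rw [Nat.sub_mul, e1]
        omega
      rw [e2, sub_self]
    · subst hf
      rw [map_sub, map_pow, map_mul, map_pow, hX, hX, hX]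
      have w1 : wt p n (⟨n - 1, by omega⟩ : Fin (n + 1)) = p ^ n - p ^ (n - 1) := by
        rw [wt]
        exact if_neg (by simp; omega)
      have w2 : wt p n (⟨j, by omega⟩ : Fin (n + 1)) = p ^ n - p ^ j := by
        rw [wt]
        exact if_neg (by simp; omega)
      have w3 : wt p n (⟨j + 1, by omega⟩ : Fin (n + 1)) = p ^ n - p ^ (j + 1) := by
        rw [wt]
        exact if_neg (by simp; omega)
      rw [w1, w2, w3, ← pow_mul, ← pow_mul, ← pow_add]
      have e1 : p ^ (n - 1) * p = p ^ n := by
        rw [← pow_succ]; congr 1; omega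
      have e2 : p ^ j * p = p ^ (j + 1) := by rw [← pow_succ]
      have e4 : p ^ (j + 1) ≤ p ^ n := Nat.pow_le_pow_right (by omega) (by omega)
      have e5 : p ^ n ≤ p ^ n * p := Nat.le_mul_of_pos_right _ (by omega)
      have e6 : (p ^ n - p ^ j) * p = (p ^ n - p ^ (n - 1)) * p + (p ^ n - p ^ (j + 1)) := by
        rw [Nat.sub_mul, Nat.sub_mul, e1, e2]
        omega
      rw [e6, sub_self]
  have hIker : Ideal.span SS ≤ RingHom.ker (Φ : MvPolynomial (Fin (n + 1)) K →+* Polynomial K) := by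
    rw [Ideal.span_le]
    intro f hf
    exact RingHom.mem_ker.mpr (hgen f hf)
  -- the normal-form submodule
  let N : Submodule K (MvPolynomial (Fin (n + 1)) K) :=
    { carrier := {r | ∀ d ∈ r.support, ∀ i : Fin (n + 1), (i : ℕ) < n → d i < p}
      add_mem' := by
        intro a b ha hb d hd
        rcases Finset.mem_union.mp (MvPolynomial.support_add hd) with h | h
        exacts [ha d h, hb d h]
      zero_mem' := by
        intro d hd
        simp at hd
      smul_mem' := by
        intro c f hf d hd
        exact hf d (MvPolynomial.support_smul hd) }
  -- injectivity on N
  have hker_N : ∀ r : MvPolynomial (Fin (n + 1)) K, r ∈ N → Φ r = 0 → r = 0 := by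
    intro r hrN hr0
    have hnorm : ∀ d ∈ r.support, ∀ i : Fin (n + 1), (i : ℕ) < n → d i < p := hrN
    rw [MvPolynomial.ext_iff]
    intro d0
    rw [MvPolynomial.coeff_zero]
    by_cases hd0 : d0 ∈ r.support
    swap
    · exact MvPolynomial.notMem_support_iff.mp hd0
    · have hr : Φ r = ∑ d ∈ r.support, Polynomial.C (coeff d r) * Polynomial.X ^ Edeg p n d := by
        conv_lhs => rw [← MvPolynomial.support_sum_monomial_coeff r]
        rw [map_sum]
        exact Finset.sum_congr rfl fun d _ => aeval_wt_monomial K p n d (coeff d r)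
      have h2 : (Φ r).coeff (Edeg p n d0) = coeff d0 r := by
        rw [hr, Polynomial.finset_sum_coeff, Finset.sum_eq_single d0]
        · rw [Polynomial.coeff_C_mul, Polynomial.coeff_X_pow, if_pos rfl, mul_one]
        · intro d hd hne
          rw [Polynomial.coeff_C_mul, Polynomial.coeff_X_pow, if_neg, mul_zero]
          exact fun hEe => hne (Edeg_inj p n hp2 d d0 (hnorm d hd) (hnorm d0 hd0) hEe.symm)
        · intro h; exact absurd hd0 h
      rw [hr0, Polynomial.coeff_zero] at h2
      exact h2.symm
  -- spanning
  have key : ∀ m : ℕ, ∀ d : Fin (n + 1) →₀ ℕ, mu n d ≤ m →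
      (monomial d 1 : MvPolynomial (Fin (n + 1)) K) ∈
        N ⊔ (Ideal.span SS).restrictScalars K := by
    intro m
    induction m with
    | zero =>
      intro d hd
      apply Submodule.mem_sup_left
      intro d' hd'
      rw [MvPolynomial.support_monomial, if_neg (one_ne_zero : (1 : K) ≠ 0)] at hd'
      rw [Finset.mem_singleton.mp hd']
      intro i hi
      by_contra hge
      have h1 : d i * (n - (i : ℕ)) ≤ mu n d :=
        Finset.single_le_sum (f := fun i => d i * (n - (i : ℕ)))
          (fun _ _ => Nat.zero_le _) (Finset.mem_univ i)
      have h2 : 1 ≤ d i * (n - (i : ℕ)) := Nat.mul_pos (by omega) (by omega)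
      omega
    | succ m ih =>
      intro d hd
      by_cases hnorm : ∀ i : Fin (n + 1), (i : ℕ) < n → d i < p
      · apply Submodule.mem_sup_left
        intro d' hd'
        rw [MvPolynomial.support_monomial, if_neg (one_ne_zero : (1 : K) ≠ 0)] at hd'
        rw [Finset.mem_singleton.mp hd']
        exact hnorm
      · push_neg at hnorm
        obtain ⟨i, hi, hpi⟩ := hnorm
        have hd'ex : ∃ d' : Fin (n + 1) →₀ ℕ, d' + Finsupp.single i p = d := by
          refine ⟨d - Finsupp.single i p, ?_⟩
          ext j
          rw [Finsupp.add_apply, Finsupp.tsub_apply]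
          by_cases hji : j = i
          · subst hji
            rw [Finsupp.single_eq_same]
            omega
          · rw [Finsupp.single_eq_of_ne' (Ne.symm hji)]
            omega
        obtain ⟨d', hdd⟩ := hd'ex
        have hmd : mu n d = mu n d' + p * (n - (i : ℕ)) := by
          rw [← hdd, mu_add, mu_single]
        have hsplit : (monomial d 1 : MvPolynomial (Fin (n + 1)) K)
            = monomial d' 1 * X i ^ p := by
          rw [X_pow_eq_monomial, monomial_mul, mul_one, hdd]
        have hppos : 1 ≤ p * (n - (i : ℕ)) := Nat.mul_pos (by omega) (by omega)
        by_cases hin : (i : ℕ) = n - 1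
        · -- first type of generator
          have hieq : i = (⟨n - 1, hlt1⟩ : Fin (n + 1)) := by
            apply Fin.ext
            simpa using hin
          have hXi : (X (⟨n - 1, hlt1⟩ : Fin (n + 1)) : MvPolynomial (Fin (n + 1)) K)
              = X i := congrArg X hieq.symm
          have h1 : (monomial d' 1 : MvPolynomial (Fin (n + 1)) K)
              * X (⟨n, hlt2⟩ : Fin (n + 1)) ^ (p - 1)
              = monomial (d' + Finsupp.single (⟨n, hlt2⟩ : Fin (n + 1)) (p - 1)) 1 := by
            rw [X_pow_eq_monomial, monomial_mul, mul_one]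
          have hsplit2 : (monomial d 1 : MvPolynomial (Fin (n + 1)) K)
              = monomial d' 1 * ((X (⟨n - 1, hlt1⟩ : Fin (n + 1))) ^ p
                  - (X (⟨n, hlt2⟩ : Fin (n + 1))) ^ (p - 1))
                + monomial (d' + Finsupp.single (⟨n, hlt2⟩ : Fin (n + 1)) (p - 1)) 1 := by
            rw [hsplit, ← hXi, ← h1]
            ring
          rw [hsplit2]
          refine Submodule.add_mem _ (Submodule.mem_sup_right ?_) ?_
          · apply Ideal.mul_mem_left
            apply Ideal.subset_span
            rw [hSS]
            exact Or.inl rfl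
          · have hmu2 : mu n (d' + Finsupp.single (⟨n, hlt2⟩ : Fin (n + 1)) (p - 1))
                = mu n d' := by
              rw [mu_add, mu_single]
              simp
            exact ih _ (by omega)
        · -- second type of generator
          have hjn : (i : ℕ) + 2 ≤ n := by omega
          have hia : (i : ℕ) < n + 1 := by omega
          have hib : (i : ℕ) + 1 < n + 1 := by omega
          have hieq : i = (⟨(i : ℕ), hia⟩ : Fin (n + 1)) := by
            apply Fin.ext
            rfl
          have hXi : (X (⟨(i : ℕ), hia⟩ : Fin (n + 1)) : MvPolynomial (Fin (n + 1)) K)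
              = X i := congrArg X hieq.symm
          have hXj1 : (X (⟨(i : ℕ) + 1, hib⟩ : Fin (n + 1)) : MvPolynomial (Fin (n + 1)) K)
              = monomial (Finsupp.single (⟨(i : ℕ) + 1, hib⟩ : Fin (n + 1)) 1) 1 := by
            rw [← X_pow_eq_monomial, pow_one]
          have h1 : (monomial d' 1 : MvPolynomial (Fin (n + 1)) K)
              * (X (⟨n - 1, hlt1⟩ : Fin (n + 1)) ^ p
                  * X (⟨(i : ℕ) + 1, hib⟩ : Fin (n + 1)))
              = monomial (d' + Finsupp.single (⟨n - 1, hlt1⟩ : Fin (n + 1)) p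
                  + Finsupp.single (⟨(i : ℕ) + 1, hib⟩ : Fin (n + 1)) 1) 1 := by
            rw [X_pow_eq_monomial, hXj1, monomial_mul, monomial_mul, mul_one, mul_one, add_assoc]
          have hsplit2 : (monomial d 1 : MvPolynomial (Fin (n + 1)) K)
              = monomial d' 1 * ((X (⟨(i : ℕ), hia⟩ : Fin (n + 1))) ^ p
                  - (X (⟨n - 1, hlt1⟩ : Fin (n + 1))) ^ p
                    * X (⟨(i : ℕ) + 1, hib⟩ : Fin (n + 1)))
                + monomial (d' + Finsupp.single (⟨n - 1, hlt1⟩ : Fin (n + 1)) p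
                    + Finsupp.single (⟨(i : ℕ) + 1, hib⟩ : Fin (n + 1)) 1) 1 := by
            rw [hsplit, ← hXi, ← h1]
            ring
          rw [hsplit2]
          refine Submodule.add_mem _ (Submodule.mem_sup_right ?_) ?_
          · apply Ideal.mul_mem_left
            apply Ideal.subset_span
            rw [hSS]
            exact Or.inr ⟨(i : ℕ), hjn, rfl⟩
          · have hmu2 : mu n (d' + Finsupp.single (⟨n - 1, hlt1⟩ : Fin (n + 1)) p
                + Finsupp.single (⟨(i : ℕ) + 1, hib⟩ : Fin (n + 1)) 1)
                = mu n d' + p * (n - (n - 1)) + 1 * (n - ((i : ℕ) + 1)) := by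
              rw [mu_add, mu_add, mu_single, mu_single]
            apply ih
            rw [hmu2]
            obtain ⟨b, hb⟩ : ∃ b, n - (i : ℕ) = b + 2 := ⟨n - (i : ℕ) - 2, by omega⟩
            have hpb : p * (n - (i : ℕ)) = p * b + 2 * p := by rw [hb]; ring
            have h2b : 2 * b ≤ p * b := Nat.mul_le_mul_right b hp2
            have hnn : n - (n - 1) = 1 := by omega
            rw [hnn]
            omega
  have hsup : ∀ f : MvPolynomial (Fin (n + 1)) K,
      f ∈ N ⊔ (Ideal.span SS).restrictScalars K := by
    intro f
    refine MvPolynomial.induction_on' f (fun d a => ?_) (fun f g hf hg => Submodule.add_mem _ hf hg)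
    have h := key (mu n d) d le_rfl
    have h2 : (monomial d a : MvPolynomial (Fin (n + 1)) K) = a • monomial d 1 := by
      rw [MvPolynomial.smul_monomial, smul_eq_mul, mul_one]
    rw [h2]
    exact Submodule.smul_mem _ _ h
  refine le_antisymm ?_ hIker
  intro f hf
  obtain ⟨r, hrN, g, hgI, hfe⟩ := Submodule.mem_sup.mp (hsup f)
  have hgI' : g ∈ Ideal.span SS := hgI
  have hgker : Φ g = 0 := RingHom.mem_ker.mp (hIker hgI')
  have hfker : Φ f = 0 := RingHom.mem_ker.mp hf
  have hrker : Φ r = 0 := by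
    have : Φ r + Φ g = 0 := by rw [← map_add, hfe]; exact hfker
    rw [hgker, add_zero] at this
    exact this
  have hr0 : r = 0 := hker_N r hrN hrker
  rw [← hfe, hr0, zero_add]
  exact hgI'
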